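/- Let T > 0 and let ω = (ω_0, …, ω_p) be a path of pairwise-distinct profiles with consecutive entries neighbors that has zero cost under LLL. Then the probability of traversing ω under log-linear learning is at least the probability of traversing it under Metropolis learning: ∏_{k=0}^{p−1} P_T^LLL(ω_k, ω_{k+1}) ≥ ∏_{k=0}^{p−1} P_T^ML(ω_k, ω_{k+1}). -/

import Mathlib

open Finset Real Filter Topology

variable {n : ℕ} {A : Fin n → Type*}

section Defs
variable [∀ i, Fintype (A i)] [∀ i, DecidableEq (A i)] [∀ i, Nonempty (A i)]

/-- `a` and `b` differ in exactly coordinate `i`. -/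
def Neighbor (a b : ∀ i, A i) (i : Fin n) : Prop :=
  a i ≠ b i ∧ ∀ j, j ≠ i → a j = b j

instance (a b : ∀ i, A i) (i : Fin n) : Decidable (Neighbor a b i) :=
  inferInstanceAs (Decidable (_ ∧ _))

/-- `φ` is a potential function for the game with utilities `U`. -/
def IsPotential (U : Fin n → (∀ i, A i) → ℝ) (φ : (∀ i, A i) → ℝ) : Prop :=
  ∀ (i : Fin n) (a : ∀ j, A j) (α α' : A i),
    U i (Function.update a i α) - U i (Function.update a i α')
      = φ (Function.update a i α) - φ (Function.update a i α')

/-- Best attainable utility of player `i` against `a₋ᵢ`. -/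
noncomputable def bestVal (U : Fin n → (∀ i, A i) → ℝ) (i : Fin n) (a : ∀ j, A j) : ℝ :=
  Finset.univ.sup' Finset.univ_nonempty fun β : A i => U i (Function.update a i β)

open Classical in
/-- Best response set of player `i` against `a₋ᵢ`. -/
noncomputable def BR (U : Fin n → (∀ i, A i) → ℝ) (i : Fin n) (a : ∀ j, A j) : Finset (A i) :=
  Finset.univ.filter fun β => U i (Function.update a i β) = bestVal U i a

/-- Metropolis learning transition cost. -/
noncomputable def VML (U : Fin n → (∀ i, A i) → ℝ) (a b : ∀ i, A i) : ℝ :=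
  ∑ i, if a i ≠ b i then max (U i a - U i b) 0 else 0

/-- Log-linear learning transition cost. -/
noncomputable def VLLL (U : Fin n → (∀ i, A i) → ℝ) (a b : ∀ i, A i) : ℝ :=
  ∑ i, if a i ≠ b i then bestVal U i a - U i b else 0

noncomputable def PMLoff (U : Fin n → (∀ i, A i) → ℝ) (T : ℝ) (a b : ∀ i, A i) : ℝ :=
  ∑ i, if Neighbor a b i then
    (1 / ((n : ℝ) * (Fintype.card (A i) : ℝ))) * Real.exp (-(max (U i a - U i b) 0) / T)
  else 0

/-- Metropolis learning transition matrix. -/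
noncomputable def PML (U : Fin n → (∀ i, A i) → ℝ) (T : ℝ) (a b : ∀ i, A i) : ℝ :=
  if a = b then 1 - ∑ c, PMLoff U T a c else PMLoff U T a b

noncomputable def PLLLoff (U : Fin n → (∀ i, A i) → ℝ) (T : ℝ) (a b : ∀ i, A i) : ℝ :=
  ∑ i, if Neighbor a b i then
    (1 / (n : ℝ)) * Real.exp (U i b / T) / ∑ β : A i, Real.exp (U i (Function.update a i β) / T)
  else 0

/-- Log-linear learning transition matrix. -/
noncomputable def PLLL (U : Fin n → (∀ i, A i) → ℝ) (T : ℝ) (a b : ∀ i, A i) : ℝ :=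
  if a = b then 1 - ∑ c, PLLLoff U T a c else PLLLoff U T a b

/-- The normalizing constant `Z_i(a₋ᵢ)`. -/
noncomputable def Zi (U : Fin n → (∀ i, A i) → ℝ) (T : ℝ) (i : Fin n) (a : ∀ j, A j) : ℝ :=
  ∑ β : A i, Real.exp (-(bestVal U i a - U i (Function.update a i β)) / T)

/-- The Gibbs distribution. -/
noncomputable def gibbs (φ : (∀ i, A i) → ℝ) (T : ℝ) (a : ∀ i, A i) : ℝ :=
  Real.exp (φ a / T) / ∑ b, Real.exp (φ b / T)

/-- Nash equilibrium. -/
def IsNash (U : Fin n → (∀ i, A i) → ℝ) (a : ∀ i, A i) : Prop :=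
  ∀ (i : Fin n) (α : A i), U i (Function.update a i α) ≤ U i a

/-- No player is ever indifferent between two of its own actions. -/
def TieFree (U : Fin n → (∀ i, A i) → ℝ) : Prop :=
  ∀ (i : Fin n) (a : ∀ j, A j) (α α' : A i), α ≠ α' →
    U i (Function.update a i α) ≠ U i (Function.update a i α')

/-- `ω 0, ω 1, …, ω p` is a path: pairwise-distinct entries, consecutive entries neighbors. -/
def IsPath (ω : ℕ → ∀ i, A i) (p : ℕ) : Prop :=
  (∀ k ≤ p, ∀ l ≤ p, ω k = ω l → k = l) ∧ ∀ k < p, ∃ i, Neighbor (ω k) (ω (k + 1)) i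

/-- Zero-cost paths from `a` to the set `B` w.r.t. the cost `V`, encoded as (length, path). -/
def ZPaths (V : (∀ i, A i) → (∀ i, A i) → ℝ) (a : ∀ i, A i) (B : Set (∀ i, A i)) :
    Set (ℕ × (ℕ → ∀ i, A i)) :=
  {q | IsPath q.2 q.1 ∧ q.2 0 = a ∧ q.2 q.1 ∈ B ∧ ∀ k < q.1, V (q.2 k) (q.2 (k + 1)) = 0}

/-- Minimal length of a zero-cost path from `a` to `B`. -/
noncomputable def minLen (V : (∀ i, A i) → (∀ i, A i) → ℝ) (a : ∀ i, A i)
    (B : Set (∀ i, A i)) : ℕ :=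
  sInf {p | ∃ ω, (p, ω) ∈ ZPaths V a B}

/-- Maximal length of a zero-cost path from `a` to `B`. -/
noncomputable def maxLen (V : (∀ i, A i) → (∀ i, A i) → ℝ) (a : ∀ i, A i)
    (B : Set (∀ i, A i)) : ℕ :=
  sSup {p | ∃ ω, (p, ω) ∈ ZPaths V a B}

/-- Communication altitude w.r.t. the cost `V` and potential `φ`. -/
noncomputable def Ac (V : (∀ i, A i) → (∀ i, A i) → ℝ) (φ : (∀ i, A i) → ℝ)
    (x y : ∀ i, A i) : ℝ :=
  sSup {v | ∃ (p : ℕ) (ω : ℕ → ∀ i, A i), 0 < p ∧ IsPath ω p ∧ ω 0 = x ∧ ω p = y ∧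
    v = ⨅ k : Fin p, (φ (ω k) - V (ω k) (ω (k + 1)))}

/-- `max_i |A_i|`. -/
noncomputable def mMax (A : Fin n → Type*) [∀ i, Fintype (A i)] : ℕ :=
  ⨆ i : Fin n, Fintype.card (A i)

/-- `min_i |A_i|`. -/
noncomputable def mMin (A : Fin n → Type*) [∀ i, Fintype (A i)] : ℕ :=
  ⨅ i : Fin n, Fintype.card (A i)

/-- `Z_max(T)`. -/
noncomputable def Zmax (U : Fin n → (∀ i, A i) → ℝ) (T : ℝ) : ℝ :=
  ⨆ i : Fin n, ⨆ a : ∀ j, A j, Zi U T i a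

noncomputable def GammaML (A : Fin n → Type*) [∀ i, Fintype (A i)] : ℝ :=
  1 / ((n : ℝ) * (mMax A : ℝ))

noncomputable def GammaLLL (U : Fin n → (∀ i, A i) → ℝ) (T : ℝ) : ℝ :=
  1 / ((n : ℝ) * Zmax U T)


lemma neighbor_unique {a b : ∀ i, A i} {i j : Fin n} (h : Neighbor a b i)
    (hj : j ≠ i) : ¬ Neighbor a b j := fun h' => h'.1 (h.2 j hj)

lemma key_step {a b : ∀ i, A i} {i : Fin n} (h : Neighbor a b i)
    (U : Fin n → (∀ i, A i) → ℝ) (T : ℝ) (hT : 0 < T)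
    (hz : VLLL U a b = 0) : PMLoff U T a b ≤ PLLLoff U T a b := by
  have hne : ∀ j, j ≠ i → ¬ (a j ≠ b j) := fun j hj => not_not_intro (h.2 j hj)
  have hVLLL : VLLL U a b = bestVal U i a - U i b := by
    rw [VLLL, Fintype.sum_eq_single i (fun j hj => if_neg (hne j hj)), if_pos h.1]
  have hbest : U i b = bestVal U i a := by
    have := hVLLL ▸ hz; linarith
  have hML : PMLoff U T a b
      = (1 / ((n : ℝ) * (Fintype.card (A i) : ℝ))) * Real.exp (-(max (U i a - U i b) 0) / T) := by
    rw [PMLoff, Fintype.sum_eq_single i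
      (fun j hj => if_neg (neighbor_unique h hj)), if_pos h]
  have hLLL : PLLLoff U T a b
      = (1 / (n : ℝ)) * Real.exp (U i b / T)
        / ∑ β : A i, Real.exp (U i (Function.update a i β) / T) := by
    rw [PLLLoff, Fintype.sum_eq_single i
      (fun j hj => if_neg (neighbor_unique h hj)), if_pos h]
  rw [hML, hLLL]
  have hn : (0 : ℝ) < n := by
    have : i.1 < n := i.2
    exact_mod_cast Nat.pos_of_ne_zero (by omega)
  have hcard : (0 : ℝ) < (Fintype.card (A i) : ℝ) := by
    exact_mod_cast Fintype.card_pos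
  have hSpos : (0 : ℝ) < ∑ β : A i, Real.exp (U i (Function.update a i β) / T) :=
    Finset.sum_pos (fun β _ => Real.exp_pos _) Finset.univ_nonempty
  have hSle : ∑ β : A i, Real.exp (U i (Function.update a i β) / T)
      ≤ (Fintype.card (A i) : ℝ) * Real.exp (U i b / T) := by
    calc ∑ β : A i, Real.exp (U i (Function.update a i β) / T)
        ≤ ∑ _β : A i, Real.exp (bestVal U i a / T) := by
          refine Finset.sum_le_sum fun β _ => Real.exp_le_exp.2 ?_
          exact div_le_div_of_nonneg_right
            (Finset.le_sup' (f := fun β : A i => U i (Function.update a i β))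
              (Finset.mem_univ β)) hT.le
      _ = (Fintype.card (A i) : ℝ) * Real.exp (U i b / T) := by
          rw [hbest]; simp [Finset.card_univ, mul_comm]
  have h1 : (1 / ((n : ℝ) * (Fintype.card (A i) : ℝ))) * Real.exp (-(max (U i a - U i b) 0) / T)
      ≤ 1 / ((n : ℝ) * (Fintype.card (A i) : ℝ)) := by
    have : Real.exp (-(max (U i a - U i b) 0) / T) ≤ 1 := by
      rw [Real.exp_le_one_iff]
      apply div_nonpos_of_nonpos_of_nonneg _ hT.le
      simp [le_max_iff]
    calc (1 / ((n : ℝ) * (Fintype.card (A i) : ℝ))) * Real.exp (-(max (U i a - U i b) 0) / T)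
        ≤ (1 / ((n : ℝ) * (Fintype.card (A i) : ℝ))) * 1 :=
          mul_le_mul_of_nonneg_left this (by positivity)
      _ = _ := mul_one _
  refine h1.trans ?_
  rw [div_le_div_iff₀ (by positivity) hSpos]
  calc 1 * (∑ β : A i, Real.exp (U i (Function.update a i β) / T))
      ≤ 1 * ((Fintype.card (A i) : ℝ) * Real.exp (U i b / T)) := by
        rw [one_mul, one_mul]; exact hSle
    _ = (1 / (n : ℝ)) * Real.exp (U i b / T) * ((n : ℝ) * (Fintype.card (A i) : ℝ)) := by
        field_simp

lemma PMLoff_nonneg (U : Fin n → (∀ i, A i) → ℝ) (T : ℝ) (a b : ∀ i, A i) :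
    0 ≤ PMLoff U T a b := by
  refine Finset.sum_nonneg fun i _ => ?_
  split
  · positivity
  · exact le_refl 0

/-- For every `T > 0` and every zero-cost LLL path, the probability of
traversing it under log-linear learning is at least its probability under
Metropolis learning. -/
theorem statement13 (hn : 0 < n)
    (U : Fin n → (∀ i, A i) → ℝ) (φ : (∀ i, A i) → ℝ) (hpot : IsPotential U φ)
    (T : ℝ) (hT : 0 < T) (p : ℕ) (ω : ℕ → ∀ j, A j) (hpath : IsPath ω p)
    (hzero : ∀ k < p, VLLL U (ω k) (ω (k + 1)) = 0) :
    ∏ k ∈ Finset.range p, PML U T (ω k) (ω (k + 1))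
      ≤ ∏ k ∈ Finset.range p, PLLL U T (ω k) (ω (k + 1)) := by
  refine Finset.prod_le_prod (fun k _ => ?_) (fun k hk => ?_)
  · rw [PML]
    split
    · next heq =>
      exfalso
      have hk' := Finset.mem_range.1 ‹k ∈ Finset.range p›
      have := hpath.1 k hk'.le (k + 1) hk' heq
      omega
    · exact PMLoff_nonneg U T _ _
  · have hk' := Finset.mem_range.1 hk
    obtain ⟨i, hnb⟩ := hpath.2 k hk'
    have hne : ω k ≠ ω (k + 1) := by
      intro heq
      have := hpath.1 k hk'.le (k + 1) hk' heq
      omega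
    rw [PML, PLLL, if_neg hne, if_neg hne]
    exact key_step hnb U T hT (hzero k hk')

end Defs
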